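/- Let G₁ be the group of finitely supported even permutations of ℕ fixing 1, and G the group of all finitely supported even permutations of ℕ. If δ : G₁ → G is a group homomorphism such that for every element b ∈ G₁ of order 3 one has δ(b) = b or δ(b) = b⁻¹, then δ(σ) = σ for all σ ∈ G₁. -/

import Mathlib

/-- A transposition of two distinct points of `ℕ`. -/
def IsSwapPerm (τ : Equiv.Perm ℕ) : Prop := ∃ a b : ℕ, a ≠ b ∧ τ = Equiv.swap a b

/-- The group of finitely supported even permutations of `ℕ`, realized as the subgroup of
`Equiv.Perm ℕ` of products of an even number of transpositions. -/
def evenFin : Subgroup (Equiv.Perm ℕ) where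
  carrier := {σ | ∃ l : List (Equiv.Perm ℕ),
    (∀ τ ∈ l, IsSwapPerm τ) ∧ Even l.length ∧ l.prod = σ}
  one_mem' := ⟨[], by simp, by simp, rfl⟩
  mul_mem' := by
    rintro σ₁ σ₂ ⟨l₁, h₁, e₁, p₁⟩ ⟨l₂, h₂, e₂, p₂⟩
    refine ⟨l₁ ++ l₂, ?_, ?_, by rw [List.prod_append, p₁, p₂]⟩
    · intro τ hτ
      rcases List.mem_append.1 hτ with h | h
      · exact h₁ τ h
      · exact h₂ τ h
    · simpa using e₁.add e₂
  inv_mem' := by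
    rintro σ ⟨l, h, e, p⟩
    refine ⟨(l.map (·⁻¹)).reverse, ?_, by simpa using e, ?_⟩
    · intro τ hτ
      rw [List.mem_reverse, List.mem_map] at hτ
      obtain ⟨τ', hτ', rfl⟩ := hτ
      obtain ⟨a, b, hab, rfl⟩ := h τ' hτ'
      exact ⟨a, b, hab, by simp [Equiv.Perm.inv_def]⟩
    · rw [← List.prod_inv_reverse, p]

/-- The subgroup of `evenFin` of those permutations fixing `1 ∈ ℕ`. -/
def evenFinFixOne : Subgroup (Equiv.Perm ℕ) :=
  evenFin ⊓ MulAction.stabilizer (Equiv.Perm ℕ) (1 : ℕ)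

section Aux

open Equiv

/-- The 3-cycle sending `a ↦ b ↦ c ↦ a`. -/
def c3 (a b c : ℕ) : Equiv.Perm ℕ := Equiv.swap a b * Equiv.swap b c

lemma c3_apply_a {a b c : ℕ} (hab : a ≠ b) (hac : a ≠ c) : c3 a b c a = b := by
  rw [c3, Equiv.Perm.mul_apply, Equiv.swap_apply_of_ne_of_ne hab hac, Equiv.swap_apply_left]

lemma c3_apply_b {a b c : ℕ} (hca : c ≠ a) (hcb : c ≠ b) : c3 a b c b = c := by
  rw [c3, Equiv.Perm.mul_apply, Equiv.swap_apply_left, Equiv.swap_apply_of_ne_of_ne hca hcb]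

lemma c3_apply_c {a b c : ℕ} : c3 a b c c = a := by
  rw [c3, Equiv.Perm.mul_apply, Equiv.swap_apply_right, Equiv.swap_apply_right]

lemma c3_apply_other {a b c x : ℕ} (hxa : x ≠ a) (hxb : x ≠ b) (hxc : x ≠ c) :
    c3 a b c x = x := by
  rw [c3, Equiv.Perm.mul_apply, Equiv.swap_apply_of_ne_of_ne hxb hxc,
    Equiv.swap_apply_of_ne_of_ne hxa hxb]

lemma c3_mem_evenFin {a b c : ℕ} (hab : a ≠ b) (hbc : b ≠ c) : c3 a b c ∈ evenFin :=
  ⟨[Equiv.swap a b, Equiv.swap b c], by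
      rintro τ hτ
      simp only [List.mem_cons, List.mem_singleton, List.not_mem_nil, or_false] at hτ
      rcases hτ with rfl | rfl
      · exact ⟨a, b, hab, rfl⟩
      · exact ⟨b, c, hbc, rfl⟩, by simp, by simp [c3]⟩

lemma c3_mem {a b c : ℕ} (ha : a ≠ 1) (hb : b ≠ 1) (hc : c ≠ 1)
    (hab : a ≠ b) (hbc : b ≠ c) : c3 a b c ∈ evenFinFixOne := by
  refine Subgroup.mem_inf.mpr ⟨c3_mem_evenFin hab hbc, ?_⟩
  rw [MulAction.mem_stabilizer_iff]
  show c3 a b c 1 = 1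
  exact c3_apply_other (Ne.symm ha) (Ne.symm hb) (Ne.symm hc)

lemma c3_pow_three {a b c : ℕ} (hab : a ≠ b) (hac : a ≠ c) (hbc : b ≠ c) :
    c3 a b c ^ 3 = 1 := by
  have h3 : ∀ x, c3 a b c (c3 a b c (c3 a b c x)) = x := by
    intro x
    rcases eq_or_ne x a with rfl | hxa
    · rw [c3_apply_a hab hac, c3_apply_b (Ne.symm hac) (Ne.symm hbc), c3_apply_c]
    rcases eq_or_ne x b with rfl | hxb
    · rw [c3_apply_b (Ne.symm hac) (Ne.symm hbc), c3_apply_c, c3_apply_a hab hac]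
    rcases eq_or_ne x c with rfl | hxc
    · rw [c3_apply_c, c3_apply_a hab hac, c3_apply_b (Ne.symm hac) (Ne.symm hbc)]
    · rw [c3_apply_other hxa hxb hxc, c3_apply_other hxa hxb hxc,
        c3_apply_other hxa hxb hxc]
  ext x
  simp only [pow_succ, pow_zero, one_mul, Equiv.Perm.mul_apply, Equiv.Perm.one_apply]
  exact h3 x

lemma c3_orderOf {a b c : ℕ} (hab : a ≠ b) (hac : a ≠ c) (hbc : b ≠ c) :
    orderOf (c3 a b c) = 3 := by
  have : Fact (Nat.Prime 3) := ⟨by norm_num⟩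
  refine orderOf_eq_prime (c3_pow_three hab hac hbc) ?_
  intro h1
  have h2 := c3_apply_a (a := a) (b := b) (c := c) hab hac
  rw [h1, Equiv.Perm.one_apply] at h2
  exact hab h2

lemma c3_inv {a b c : ℕ} (hab : a ≠ b) (hac : a ≠ c) (hbc : b ≠ c) :
    (c3 a b c)⁻¹ = c3 a c b := by
  refine inv_eq_of_mul_eq_one_right ?_
  ext x
  simp only [Equiv.Perm.mul_apply, Equiv.Perm.one_apply]
  rcases eq_or_ne x a with rfl | hxa
  · rw [c3_apply_a hac hab, c3_apply_c]
  rcases eq_or_ne x b with rfl | hxb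
  · rw [c3_apply_c, c3_apply_a hab hac]
  rcases eq_or_ne x c with rfl | hxc
  · rw [c3_apply_b (Ne.symm hab) hbc, c3_apply_b (Ne.symm hac) (Ne.symm hbc)]
  · rw [c3_apply_other hxa hxc hxb, c3_apply_other hxa hxb hxc]

lemma c3_conj (σ : Equiv.Perm ℕ) (x y z : ℕ) :
    σ * c3 x y z * σ⁻¹ = c3 (σ x) (σ y) (σ z) := by
  rw [c3, c3, Equiv.swap_apply_apply, Equiv.swap_apply_apply]
  group

lemma fin_swap_via {n : ℕ} (x y : Fin n) :
    Equiv.Perm.viaEmbeddingHom Fin.valEmbedding (Equiv.swap x y)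
      = Equiv.swap (x : ℕ) (y : ℕ) := by
  rw [Equiv.Perm.viaEmbeddingHom_apply]
  ext z
  by_cases hz : z < n
  · have hz' : z = Fin.valEmbedding ⟨z, hz⟩ := rfl
    rw [hz', Equiv.Perm.viaEmbedding_apply]
    exact (Function.Injective.swap_apply Fin.val_injective x y ⟨z, hz⟩).symm
  · rw [Equiv.Perm.viaEmbedding_apply_of_notMem]
    · refine (Equiv.swap_apply_of_ne_of_ne ?_ ?_).symm
      · exact fun h => hz (h ▸ x.isLt)
      · exact fun h => hz (h ▸ y.isLt)
    · rintro ⟨k, hk⟩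
      exact hz (hk ▸ k.isLt)

lemma bound_list : ∀ l : List (Equiv.Perm ℕ), (∀ τ ∈ l, IsSwapPerm τ) →
    ∃ n : ℕ, ∀ τ ∈ l, ∃ x y : ℕ, x ≠ y ∧ x < n ∧ y < n ∧ τ = Equiv.swap x y := by
  intro l
  induction l with
  | nil => exact fun _ => ⟨0, by simp⟩
  | cons τ l ih =>
    intro hl
    obtain ⟨n, hn⟩ := ih fun τ' hτ' => hl τ' (List.mem_cons_of_mem _ hτ')
    obtain ⟨x, y, hxy, rfl⟩ := hl τ List.mem_cons_self
    refine ⟨max n (max x y) + 1, ?_⟩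
    rintro τ' hτ'
    rcases List.mem_cons.mp hτ' with rfl | hτ'
    · exact ⟨x, y, hxy, by omega, by omega, rfl⟩
    · obtain ⟨x', y', h1, h2, h3, h4⟩ := hn τ' hτ'
      exact ⟨x', y', h1, by omega, by omega, h4⟩

lemma to_fin_list (n : ℕ) : ∀ l : List (Equiv.Perm ℕ),
    (∀ τ ∈ l, ∃ x y : Fin n, x ≠ y ∧ τ = Equiv.swap (x : ℕ) (y : ℕ)) →
    ∃ l' : List (Equiv.Perm (Fin n)), l'.length = l.length ∧
      (∀ τ ∈ l', Equiv.Perm.IsSwap τ) ∧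
      Equiv.Perm.viaEmbeddingHom Fin.valEmbedding l'.prod = l.prod := by
  intro l
  induction l with
  | nil => exact fun _ => ⟨[], rfl, by simp, by simp⟩
  | cons τ l ih =>
    intro hl
    obtain ⟨l', hlen, hsw, hprod⟩ := ih fun τ' hτ' => hl τ' (List.mem_cons_of_mem _ hτ')
    obtain ⟨x, y, hxy, rfl⟩ := hl τ List.mem_cons_self
    refine ⟨Equiv.swap x y :: l', by simp [hlen], ?_, ?_⟩
    · rintro τ' hτ'
      rcases List.mem_cons.mp hτ' with rfl | hτ'
      · exact ⟨x, y, hxy, rfl⟩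
      · exact hsw τ' hτ'
    · rw [List.prod_cons, List.prod_cons, map_mul, hprod, fin_swap_via]

lemma swap_not_even {a b : ℕ} (hab : a ≠ b) : Equiv.swap a b ∉ evenFin := by
  rintro ⟨l, hl, he, hp⟩
  obtain ⟨n0, hn0⟩ := bound_list l hl
  set n := max n0 (max a b) + 1 with hn
  have ha : a < n := by omega
  have hb : b < n := by omega
  obtain ⟨l', hlen, hsw, hprod⟩ := to_fin_list n l (by
    intro τ hτ
    obtain ⟨x, y, h1, h2, h3, h4⟩ := hn0 τ hτ
    exact ⟨⟨x, by omega⟩, ⟨y, by omega⟩, by simpa [Fin.ext_iff] using h1, h4⟩)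
  have hinj := Equiv.Perm.viaEmbeddingHom_injective (Fin.valEmbedding (n := n))
  have hps : l'.prod = Equiv.swap (⟨a, ha⟩ : Fin n) ⟨b, hb⟩ := by
    apply hinj
    rw [hprod, hp, fin_swap_via]
  have hs := Equiv.Perm.sign_prod_list_swap hsw
  rw [hps, Equiv.Perm.sign_swap (by simpa [Fin.ext_iff] using hab)] at hs
  rw [hlen, Even.neg_one_pow he] at hs
  exact absurd hs (by decide)

lemma moved_finite_list : ∀ l : List (Equiv.Perm ℕ), (∀ τ ∈ l, IsSwapPerm τ) →
    {x | l.prod x ≠ x}.Finite := by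
  intro l
  induction l with
  | nil => intro _; simp
  | cons τ l ih =>
    intro hl
    obtain ⟨x, y, hxy, rfl⟩ := hl τ List.mem_cons_self
    have h1 : {z | Equiv.swap x y z ≠ z}.Finite := by
      apply Set.Finite.subset ((Set.finite_singleton y).insert x)
      intro z hz
      by_contra hz2
      simp only [Set.mem_insert_iff, Set.mem_singleton_iff, not_or] at hz2
      exact hz (Equiv.swap_apply_of_ne_of_ne hz2.1 hz2.2)
    have h2 := ih fun τ' hτ' => hl τ' (List.mem_cons_of_mem _ hτ')
    apply Set.Finite.subset (h1.union h2)
    intro z hz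
    simp only [Set.mem_setOf_eq, List.prod_cons, Equiv.Perm.mul_apply] at hz
    by_contra hz2
    simp only [Set.mem_union, Set.mem_setOf_eq, not_or, not_not] at hz2
    rw [hz2.2] at hz
    exact hz hz2.1

lemma moved_finite {σ : Equiv.Perm ℕ} (h : σ ∈ evenFin) : {x | σ x ≠ x}.Finite := by
  obtain ⟨l, hl, _, rfl⟩ := h
  exact moved_finite_list l hl

lemma delta_c3 (δ : ↥evenFinFixOne →* ↥evenFin)
    (h : ∀ b : ↥evenFinFixOne, orderOf b = 3 →
      ((δ b : Equiv.Perm ℕ)) = (b : Equiv.Perm ℕ) ∨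
      ((δ b : Equiv.Perm ℕ)) = ((b : Equiv.Perm ℕ))⁻¹)
    {a b c : ℕ} (ha : a ≠ 1) (hb : b ≠ 1) (hc : c ≠ 1)
    (hab : a ≠ b) (hac : a ≠ c) (hbc : b ≠ c) (hm : c3 a b c ∈ evenFinFixOne) :
    ((δ ⟨c3 a b c, hm⟩ : Equiv.Perm ℕ)) = c3 a b c := by
  set g1 : ↥evenFinFixOne := ⟨c3 a b c, hm⟩ with hg1
  have ho1 : orderOf g1 = 3 := by
    rw [hg1, Subgroup.orderOf_mk]
    exact c3_orderOf hab hac hbc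
  rcases h g1 ho1 with h1 | h1
  · exact h1
  exfalso
  set l : ℕ := a + b + c + 2 with hl
  set m : ℕ := a + b + c + 3 with hm'
  have hal : a ≠ l := by omega
  have hbl : b ≠ l := by omega
  have hcl : c ≠ l := by omega
  have ham : a ≠ m := by omega
  have hbm : b ≠ m := by omega
  have hcm : c ≠ m := by omega
  have hlm : l ≠ m := by omega
  have hl1 : l ≠ 1 := by omega
  have hm1 : m ≠ 1 := by omega
  set g2 : ↥evenFinFixOne := ⟨c3 c l m, c3_mem hc hl1 hm1 hcl hlm⟩ with hg2
  have ho2 : orderOf g2 = 3 := by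
    rw [hg2, Subgroup.orderOf_mk]
    exact c3_orderOf hcl hcm hlm
  set g3 : ↥evenFinFixOne := g1 * g2 * g1⁻¹ with hg3
  have hg3coe : ((g3 : Equiv.Perm ℕ)) = c3 a l m := by
    push_cast [hg3]
    rw [c3_conj, c3_apply_c, c3_apply_other (Ne.symm hal) (Ne.symm hbl) (Ne.symm hcl),
      c3_apply_other (Ne.symm ham) (Ne.symm hbm) (Ne.symm hcm)]
  have ho3 : orderOf g3 = 3 := by
    rw [← Subgroup.orderOf_coe, hg3coe]
    exact c3_orderOf hal ham hlm
  -- compute δ g3 applied to a : it fixes a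
  have hδg1 : ((δ g1 : Equiv.Perm ℕ)) = c3 a c b := by
    rw [h1, hg1]
    exact c3_inv hab hac hbc
  have hfix : ((δ g3 : Equiv.Perm ℕ)) a = a := by
    have hcoe : ((δ g3 : Equiv.Perm ℕ))
        = c3 a c b * (δ g2 : Equiv.Perm ℕ) * (c3 a c b)⁻¹ := by
      rw [hg3, map_mul, map_mul, map_inv]
      push_cast
      rw [hδg1]
    have hconj2 : c3 a c b * c3 c l m * (c3 a c b)⁻¹ = c3 b l m := by
      rw [c3_conj, c3_apply_b (Ne.symm hab) hbc,
        c3_apply_other (Ne.symm hal) (Ne.symm hcl) (Ne.symm hbl),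
        c3_apply_other (Ne.symm ham) (Ne.symm hcm) (Ne.symm hbm)]
    rcases h g2 ho2 with h2 | h2
    · rw [hcoe, h2]
      show (c3 a c b * (g2 : Equiv.Perm ℕ) * (c3 a c b)⁻¹) a = a
      rw [hg2]
      show (c3 a c b * c3 c l m * (c3 a c b)⁻¹) a = a
      rw [hconj2]
      exact c3_apply_other hab hal ham
    · rw [hcoe, h2]
      show (c3 a c b * ((g2 : Equiv.Perm ℕ))⁻¹ * (c3 a c b)⁻¹) a = a
      have : c3 a c b * ((g2 : Equiv.Perm ℕ))⁻¹ * (c3 a c b)⁻¹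
          = (c3 a c b * (g2 : Equiv.Perm ℕ) * (c3 a c b)⁻¹)⁻¹ := by group
      rw [this, hg2]
      show ((c3 a c b * c3 c l m * (c3 a c b)⁻¹)⁻¹) a = a
      rw [hconj2, Equiv.Perm.inv_eq_iff_eq]
      exact (c3_apply_other hab hal ham).symm
  -- but h g3 says δ g3 moves a
  rcases h g3 ho3 with h3 | h3
  · rw [h3, hg3coe] at hfix
    rw [c3_apply_a hal ham] at hfix
    exact hal hfix.symm
  · rw [h3, hg3coe, Equiv.Perm.inv_eq_iff_eq, c3_apply_a hal ham] at hfix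
    exact hal hfix

end Aux

lemma main_ind (δ : ↥evenFinFixOne →* ↥evenFin)
    (h : ∀ b : ↥evenFinFixOne, orderOf b = 3 →
      ((δ b : Equiv.Perm ℕ)) = (b : Equiv.Perm ℕ) ∨
      ((δ b : Equiv.Perm ℕ)) = ((b : Equiv.Perm ℕ))⁻¹) :
    ∀ n : ℕ, ∀ g : ↥evenFinFixOne, ∀ hf : {x | (g : Equiv.Perm ℕ) x ≠ x}.Finite,
      hf.toFinset.card ≤ n → ((δ g : Equiv.Perm ℕ)) = (g : Equiv.Perm ℕ) := by
  intro n
  induction n with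
  | zero =>
    intro g hf hcard
    have hftop : hf.toFinset = ∅ := Finset.card_eq_zero.mp (Nat.le_zero.mp hcard)
    have hone : (g : Equiv.Perm ℕ) = 1 := by
      ext x
      by_contra hx
      have : x ∈ hf.toFinset := hf.mem_toFinset.mpr (by simpa using hx)
      simp [hftop] at this
    have : g = 1 := Subtype.ext (by simpa using hone)
    rw [this, map_one, OneMemClass.coe_one, OneMemClass.coe_one]
  | succ n ih =>
    intro g hf hcard
    by_cases h1 : (g : Equiv.Perm ℕ) = 1
    · have : g = 1 := Subtype.ext (by simpa using h1)
      rw [this, map_one, OneMemClass.coe_one, OneMemClass.coe_one]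
    · -- pick a moved point
      have hex : ∃ a, (g : Equiv.Perm ℕ) a ≠ a := by
        by_contra hno
        push_neg at hno
        exact h1 (Equiv.ext fun x => (hno x).trans rfl)
      obtain ⟨a, hga⟩ := hex
      have hmem := Subgroup.mem_inf.mp g.2
      have hgone : (g : Equiv.Perm ℕ) 1 = 1 := MulAction.mem_stabilizer_iff.mp hmem.2
      have ha1 : a ≠ 1 := fun hh => hga (hh ▸ hgone)
      set b := (g : Equiv.Perm ℕ) a with hbdef
      have hba : b ≠ a := hga
      have hb1 : b ≠ 1 := by
        intro hh
        exact ha1 ((g : Equiv.Perm ℕ).injective (by rw [← hbdef, hh, hgone]))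
      have hgb : (g : Equiv.Perm ℕ) b ≠ b := by
        intro hh
        exact hba ((g : Equiv.Perm ℕ).injective (by rw [← hbdef, hh]))
      by_cases hex2 : ∃ c, (g : Equiv.Perm ℕ) c ≠ c ∧ c ≠ a ∧ c ≠ b
      · obtain ⟨c, hgc, hca, hcb⟩ := hex2
        have hc1 : c ≠ 1 := fun hh => hgc (hh ▸ hgone)
        have hmτ : c3 a b c ∈ evenFinFixOne :=
          c3_mem ha1 hb1 hc1 (Ne.symm hba) (Ne.symm hcb)
        set τ : ↥evenFinFixOne := ⟨c3 a b c, hmτ⟩ with hτdef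
        set g' : ↥evenFinFixOne := τ⁻¹ * g with hg'def
        have hg'coe : (g' : Equiv.Perm ℕ) = (c3 a b c)⁻¹ * (g : Equiv.Perm ℕ) := rfl
        have hf' : {x | (g' : Equiv.Perm ℕ) x ≠ x}.Finite :=
          moved_finite (Subgroup.mem_inf.mp g'.2).1
        have hsub : hf'.toFinset ⊆ hf.toFinset.erase a := by
          intro x hx
          rw [Set.Finite.mem_toFinset, Set.mem_setOf_eq, hg'coe] at hx
          rw [Finset.mem_erase, Set.Finite.mem_toFinset, Set.mem_setOf_eq]
          constructor
          · rintro rfl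
            apply hx
            rw [Equiv.Perm.mul_apply, ← hbdef, Equiv.Perm.inv_eq_iff_eq,
              c3_apply_a (Ne.symm hba) (fun hh => hca hh.symm)]
          · intro hgx
            apply hx
            have hxa : x ≠ a := fun hh => hga (by rw [hbdef, ← hh]; exact hgx)
            have hxb : x ≠ b := fun hh => hgb (by rw [← hh]; exact hgx)
            have hxc : x ≠ c := fun hh => hgc (hh ▸ hgx)
            rw [Equiv.Perm.mul_apply, hgx, Equiv.Perm.inv_eq_iff_eq,
              c3_apply_other hxa hxb hxc]
        have hamem : a ∈ hf.toFinset := hf.mem_toFinset.mpr hga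
        have hcard' : hf'.toFinset.card ≤ n := by
          have h2 := Finset.card_le_card hsub
          rw [Finset.card_erase_of_mem hamem] at h2
          omega
        have hg'fix := ih g' hf' hcard'
        have hgeq : g = τ * g' := by rw [hg'def]; group
        rw [hgeq, map_mul]
        push_cast
        rw [hg'fix, delta_c3 δ h ha1 hb1 hc1 (Ne.symm hba) (fun hh => hca hh.symm)
          (Ne.symm hcb) hmτ]
      · -- g is the swap a b, contradicting evenness
        push_neg at hex2
        exfalso
        have hgba : (g : Equiv.Perm ℕ) b = a := by
          by_contra hne
          have hmoved : (g : Equiv.Perm ℕ) ((g : Equiv.Perm ℕ) b) ≠ (g : Equiv.Perm ℕ) b :=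
            fun hh => hgb ((g : Equiv.Perm ℕ).injective hh)
          exact hgb (hex2 _ hmoved hne)
        have hswap : (g : Equiv.Perm ℕ) = Equiv.swap a b := by
          ext x
          rcases eq_or_ne x a with rfl | hxa
          · rw [Equiv.swap_apply_left, ← hbdef]
          rcases eq_or_ne x b with rfl | hxb
          · rw [Equiv.swap_apply_right, hgba]
          · rw [Equiv.swap_apply_of_ne_of_ne hxa hxb]
            by_contra hx
            exact hxb (hex2 x hx hxa)
        exact swap_not_even (Ne.symm hba) (hswap ▸ hmem.1)


/-- If `δ : G₁ → G` is a group homomorphism from the group `G₁` of finitely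
supported even permutations of `ℕ` fixing `1` to the group `G` of all finitely supported even
permutations of `ℕ`, and for every element `b` of order `3` one has `δ(b) = b` or
`δ(b) = b⁻¹`, then `δ` is the identity: `δ(σ) = σ` for all `σ ∈ G₁`. -/
theorem stmt5 (δ : ↥evenFinFixOne →* ↥evenFin)
    (h : ∀ b : ↥evenFinFixOne, orderOf b = 3 →
      ((δ b : Equiv.Perm ℕ)) = (b : Equiv.Perm ℕ) ∨
      ((δ b : Equiv.Perm ℕ)) = ((b : Equiv.Perm ℕ))⁻¹) :
    ∀ σ : ↥evenFinFixOne, ((δ σ : Equiv.Perm ℕ)) = (σ : Equiv.Perm ℕ) := by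
  intro σ
  exact main_ind δ h _ σ (moved_finite (Subgroup.mem_inf.mp σ.2).1) le_rfl
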